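/- Let B be a commutative O-algebra with π-derivation δ and associated Frobenius lift φ, and assume φ(π·1_B) = π·1_B. Let n ≥ 1 and let t_0, t_1, …, t_n ∈ B satisfy φ^j(t_0) = Σ_{i=0}^{j} π^i · t_i^{q^{j−i}} for every 0 ≤ j ≤ n. Then π^n · t_n = Σ_{i=0}^{n−1} Σ_{j=1}^{q^{n−1−i}} π^{i+j} · binom(q^{n−1−i}, j) · t_i^{q·(q^{n−1−i}−j)} · δ(t_i)^j, where binom denotes the binomial coefficient. (Equivalently, when π is a non-zero-divisor in B, t_n = δ(t_{n−1}) + Σ_{i=0}^{n−2} Σ_{j=1}^{q^{n−1−i}} π^{i+j−n} binom(q^{n−1−i}, j) t_i^{q(q^{n−1−i}−j)} δ(t_i)^j.) -/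

import Mathlib

open MvPolynomial

/-- A `π`-derivation on a commutative `O`-algebra `B`, relative to the polynomial
`C ∈ O[X,Y]` satisfying `π·C = X^q + Y^q - (X+Y)^q`. -/
def IsPiDeriv {O : Type*} [CommRing O] (π : O) (q : ℕ) (C : MvPolynomial (Fin 2) O)
    {B : Type*} [CommRing B] [Algebra O B] (δ : B → B) : Prop :=
  δ 1 = 0 ∧
  (∀ x y : B, δ (x + y) = δ x + δ y + MvPolynomial.aeval ![x, y] C) ∧
  (∀ x y : B, δ (x * y) = x ^ q * δ y + y ^ q * δ x + algebraMap O B π * δ x * δ y)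

/-- The formula for `π^n · t_n` for a family `t_0, …, t_n` whose ghost-type
relations `φ^j(t_0) = Σ_{i=0}^{j} π^i t_i^{q^{j-i}}` hold for all `j ≤ n`. -/
theorem pi_pow_mul_t_eq_double_sum
    {O B : Type*} [CommRing O] [CommRing B] [Algebra O B]
    (π : O) (hπ : π ∈ nonZeroDivisors O) (q : ℕ) (hq : 1 ≤ q)
    (C : MvPolynomial (Fin 2) O)
    (hC : MvPolynomial.C π * C = X 0 ^ q + X 1 ^ q - (X 0 + X 1) ^ q)
    (δ : B → B) (hδ : IsPiDeriv π q C δ)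
    (φ : B → B) (hφ : ∀ x : B, φ x = x ^ q + algebraMap O B π * δ x)
    (hfix : φ (algebraMap O B π) = algebraMap O B π)
    (n : ℕ) (hn : 1 ≤ n) (t : ℕ → B)
    (ht : ∀ j ≤ n, φ^[j] (t 0) =
      ∑ i ∈ Finset.range (j + 1), algebraMap O B π ^ i * t i ^ q ^ (j - i)) :
    algebraMap O B π ^ n * t n =
      ∑ i ∈ Finset.range n, ∑ j ∈ Finset.Icc 1 (q ^ (n - 1 - i)),
        algebraMap O B π ^ (i + j) * ((q ^ (n - 1 - i)).choose j : B) *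
          t i ^ (q * (q ^ (n - 1 - i) - j)) * δ (t i) ^ j := by

  obtain ⟨m, rfl⟩ : ∃ m, n = m + 1 := ⟨n - 1, by omega⟩
  set P : B := algebraMap O B π with hP
  obtain ⟨hδ1, hδadd, hδmul⟩ := hδ
  have hπC : ∀ x y : B, P * (MvPolynomial.aeval ![x, y]) C
      = x ^ q + y ^ q - (x + y) ^ q := by
    intro x y
    have h := congrArg (MvPolynomial.aeval ![x, y]) hC
    simpa [hP] using h
  have hadd : ∀ x y : B, φ (x + y) = φ x + φ y := by
    intro x y
    rw [hφ, hφ, hφ, hδadd]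
    linear_combination hπC x y
  have hmul : ∀ x y : B, φ (x * y) = φ x * φ y := by
    intro x y
    rw [hφ, hφ, hφ, hδmul, mul_pow]
    ring
  have hone : φ 1 = 1 := by rw [hφ, hδ1]; simp
  have hzero : φ 0 = 0 := by
    have h := hadd 0 0
    rw [add_zero] at h
    exact left_eq_add.mp h
  have hpow : ∀ (x : B) (k : ℕ), φ (x ^ k) = φ x ^ k := by
    intro x k
    induction k with
    | zero => simpa using hone
    | succ k ih => rw [pow_succ, hmul, ih, pow_succ]
  have hsum : ∀ (s : Finset ℕ) (f : ℕ → B), φ (∑ i ∈ s, f i) = ∑ i ∈ s, φ (f i) := by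
    intro s f
    induction s using Finset.induction_on with
    | empty => simpa using hzero
    | insert _ _ h ih => rw [Finset.sum_insert h, Finset.sum_insert h, hadd, ih]
  have binom : ∀ (x d : B) (M : ℕ), (x ^ q + P * d) ^ M =
      x ^ (q * M) + ∑ j ∈ Finset.Icc 1 M,
        P ^ j * (M.choose j : B) * x ^ (q * (M - j)) * d ^ j := by
    intro x d M
    rw [add_comm, add_pow, Finset.sum_range_succ']
    have h0 : (P * d) ^ 0 * (x ^ q) ^ (M - 0) * ((M.choose 0 : ℕ) : B) = x ^ (q * M) := by
      simp [← pow_mul, mul_comm]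
    rw [h0, ← Finset.Ico_add_one_right_eq_Icc, Finset.sum_Ico_eq_sum_range]
    rw [add_comm]
    congr 1
    apply Finset.sum_congr rfl
    intro j hj
    have h1 : 1 + j = j + 1 := Nat.add_comm 1 j
    rw [h1, mul_pow, ← pow_mul]
    ring
  have key := ht (m + 1) le_rfl
  have key2 := ht m (by omega)
  rw [Function.iterate_succ_apply', key2, hsum] at key
  simp only [hmul, hpow] at key
  simp only [hfix] at key
  simp only [hφ] at key
  have hexp : ∀ i ∈ Finset.range (m + 1),
      P ^ i * (t i ^ q + P * δ (t i)) ^ q ^ (m - i)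
      = P ^ i * t i ^ q ^ (m + 1 - i) + ∑ j ∈ Finset.Icc 1 (q ^ (m - i)),
          P ^ (i + j) * ((q ^ (m - i)).choose j : B) *
            t i ^ (q * (q ^ (m - i) - j)) * δ (t i) ^ j := by
    intro i hi
    rw [binom, mul_add, Finset.mul_sum]
    have hq' : q * q ^ (m - i) = q ^ (m + 1 - i) := by
      rw [← pow_succ']
      congr 1
      simp only [Finset.mem_range] at hi
      omega
    rw [hq']
    congr 1
    apply Finset.sum_congr rfl
    intro j hj
    rw [pow_add]
    ring
  rw [Finset.sum_range_succ (fun i => P ^ i * t i ^ q ^ (m + 1 - i)) (m + 1)] at key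
  rw [Finset.sum_congr rfl hexp, Finset.sum_add_distrib] at key
  simp only [Nat.sub_self, pow_zero, pow_one] at key
  exact (add_left_cancel key).symm
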